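/- A Hermiticity-preserving map Φ : B(K) → B(H) is k-positive if and only if Ad_E∘Φ∘Ad_F is completely positive for every rank-k projection E on H and every rank-k projection F on K. -/

import Mathlib

open Matrix BigOperators ComplexOrder
open scoped Kronecker ComplexConjugate

/-- Square complex matrices of size `d`, modeling `B(ℂ^d)`. -/
abbrev MatC (d : ℕ) := Matrix (Fin d) (Fin d) ℂ

/-- Hilbert–Schmidt (trace) inner product `⟨A, B⟩ = Tr (A B*)`. -/
noncomputable def hsInner {ι : Type*} [Fintype ι] (A B : Matrix ι ι ℂ) : ℂ :=
  (A * Bᴴ).trace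

/-- Inner product of linear maps: `⟨Φ, Ψ⟩ = Σ_{k,l} ⟨Φ f_{kl}, Ψ f_{kl}⟩`. -/
noncomputable def mapInner {a b : ℕ} (Φ Ψ : MatC a →ₗ[ℂ] MatC b) : ℂ :=
  ∑ k : Fin a, ∑ l : Fin a,
    hsInner (Φ (Matrix.single k l 1)) (Ψ (Matrix.single k l 1))

/-- The adjoint map `Φ*` w.r.t. the trace inner products, satisfying
`⟨A, Φ B⟩ = ⟨Φ* A, B⟩`. -/
noncomputable def adjointMap {a b : ℕ} (Φ : MatC a →ₗ[ℂ] MatC b) : MatC b →ₗ[ℂ] MatC a where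
  toFun A := Matrix.of fun k l => hsInner A (Φ (Matrix.single k l 1))
  map_add' := by
    intro A B; ext k l
    simp [hsInner, Matrix.add_mul]
  map_smul' := by
    intro c A; ext k l
    simp [hsInner, Matrix.smul_mul]

/-- The conjugation map `Ad_V : ρ ↦ V ρ V*`. -/
noncomputable def adMap {a b : ℕ} (V : Matrix (Fin b) (Fin a) ℂ) : MatC a →ₗ[ℂ] MatC b where
  toFun ρ := V * ρ * Vᴴ
  map_add' := by intro ρ σ; simp [Matrix.mul_add, Matrix.add_mul]
  map_smul' := by intro c ρ; simp [Matrix.mul_smul, Matrix.smul_mul]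

/-- The map `Φ ⊗ id_k` acting on `Matrix (Fin a × Fin k)`. -/
noncomputable def tensId {a b : ℕ} (Φ : MatC a →ₗ[ℂ] MatC b) (k : ℕ)
    (X : Matrix (Fin a × Fin k) (Fin a × Fin k) ℂ) :
    Matrix (Fin b × Fin k) (Fin b × Fin k) ℂ :=
  Matrix.of fun p q => Φ (Matrix.of fun i j => X (i, p.2) (j, q.2)) p.1 q.1

/-- `Φ` is `k`-positive if `Φ ⊗ id_k` preserves positive semidefiniteness. -/
def IsKPositive {a b : ℕ} (Φ : MatC a →ₗ[ℂ] MatC b) (k : ℕ) : Prop :=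
  ∀ X : Matrix (Fin a × Fin k) (Fin a × Fin k) ℂ, X.PosSemidef → (tensId Φ k X).PosSemidef

/-- `Φ` is completely positive if it is `k`-positive for all `k`. -/
def IsCompletelyPositive {a b : ℕ} (Φ : MatC a →ₗ[ℂ] MatC b) : Prop :=
  ∀ k : ℕ, IsKPositive Φ k

/-- Positive map: maps PSD matrices to PSD matrices. -/
def IsPosMap {a b : ℕ} (Φ : MatC a →ₗ[ℂ] MatC b) : Prop :=
  ∀ X : MatC a, X.PosSemidef → (Φ X).PosSemidef

/-- Hermiticity-preserving map. -/
def HermPreserving {a b : ℕ} (Φ : MatC a →ₗ[ℂ] MatC b) : Prop :=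
  ∀ X, Φ Xᴴ = (Φ X)ᴴ

/-- Choi–Jamiołkowski matrix `J(Φ) = Σ_{k,l} f_{kl} ⊗ Φ(f_{kl})`. -/
noncomputable def choi {a b : ℕ} (Φ : MatC a →ₗ[ℂ] MatC b) :
    Matrix (Fin a × Fin b) (Fin a × Fin b) ℂ :=
  ∑ k : Fin a, ∑ l : Fin a,
    (Matrix.single k l (1 : ℂ)) ⊗ₖ (Φ (Matrix.single k l 1))

noncomputable instance instTopMaps {a b : ℕ} : TopologicalSpace (MatC a →ₗ[ℂ] MatC b) :=
  TopologicalSpace.induced (fun Φ => (Φ : MatC a → MatC b)) inferInstance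

/-- A cone with a mapping cone symmetry (mcs-cone): a nonzero closed convex cone of
positive maps, stable under two-sided composition with completely positive maps. -/
def IsMcsCone {a b : ℕ} (C : Set (MatC a →ₗ[ℂ] MatC b)) : Prop :=
  (∃ Φ ∈ C, Φ ≠ 0) ∧ IsClosed C ∧
  (∀ Φ ∈ C, ∀ Ψ ∈ C, Φ + Ψ ∈ C) ∧
  (∀ Φ ∈ C, ∀ c : ℝ, 0 ≤ c → (c : ℂ) • Φ ∈ C) ∧
  (∀ Φ ∈ C, IsPosMap Φ) ∧
  (∀ Φ ∈ C, ∀ Υ : MatC b →ₗ[ℂ] MatC b, IsCompletelyPositive Υ →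
    ∀ Ω : MatC a →ₗ[ℂ] MatC a, IsCompletelyPositive Ω → Υ ∘ₗ Φ ∘ₗ Ω ∈ C)

/-- Dual cone inside Hermiticity-preserving maps. -/
def dualCone {a b : ℕ} (C : Set (MatC a →ₗ[ℂ] MatC b)) : Set (MatC a →ₗ[ℂ] MatC b) :=
  {Ψ | HermPreserving Ψ ∧ ∀ Φ ∈ C, 0 ≤ mapInner Ψ Φ}
open scoped MatrixOrder in
lemma Matrix.PosSemidef.exists_sqrt_aux {ι : Type*} [Fintype ι] [DecidableEq ι] {X : Matrix ι ι ℂ}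
    (hX : X.PosSemidef) : ∃ S : Matrix ι ι ℂ, S.PosSemidef ∧ S * S = X :=
  ⟨CFC.sqrt X, (CFC.sqrt_nonneg X).posSemidef, CFC.sqrt_mul_sqrt_self X hX.nonneg⟩

/-- a square root of a PSD matrix. -/
noncomputable def Matrix.PosSemidef.sqrt {ι : Type*} [Fintype ι] [DecidableEq ι]
    {X : Matrix ι ι ℂ} (hX : X.PosSemidef) : Matrix ι ι ℂ :=
  Classical.choose hX.exists_sqrt_aux

lemma Matrix.PosSemidef.posSemidef_sqrt {ι : Type*} [Fintype ι] [DecidableEq ι]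
    {X : Matrix ι ι ℂ} (hX : X.PosSemidef) : hX.sqrt.PosSemidef :=
  (Classical.choose_spec hX.exists_sqrt_aux).1

lemma Matrix.PosSemidef.sqrt_mul_self {ι : Type*} [Fintype ι] [DecidableEq ι]
    {X : Matrix ι ι ℂ} (hX : X.PosSemidef) : hX.sqrt * hX.sqrt = X :=
  (Classical.choose_spec hX.exists_sqrt_aux).2

namespace Stmt15Aux

/-- rank one matrix `y yᴴ`. -/
noncomputable def rk1 {ι : Type*} (y : ι → ℂ) : Matrix ι ι ℂ :=
  Matrix.vecMulVec y (star y)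

lemma rk1_mulVec {ι : Type*} [Fintype ι] (y x : ι → ℂ) :
    (rk1 y) *ᵥ x = (dotProduct (star y) x) • y := by
  ext i
  simp only [rk1, Matrix.mulVec, dotProduct, Matrix.vecMulVec_apply, Pi.star_apply,
    Pi.smul_apply, smul_eq_mul, Finset.sum_mul]
  apply Finset.sum_congr rfl; intro j _; ring

lemma rk1_posSemidef {ι : Type*} [Fintype ι] (y : ι → ℂ) : (rk1 y).PosSemidef := by
  refine Matrix.PosSemidef.of_dotProduct_mulVec_nonneg ?_ ?_
  · ext p q
    simp [rk1, Matrix.vecMulVec_apply, Matrix.conjTranspose_apply, mul_comm]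
  · intro x
    rw [rk1_mulVec, dotProduct_smul]
    have h2 : dotProduct (star x) y = conj (dotProduct (star y) x) := by
      simp only [dotProduct, map_sum, _root_.map_mul, Pi.star_apply, RCLike.star_def,
        Complex.conj_conj]
      apply Finset.sum_congr rfl; intro i _; ring
    rw [smul_eq_mul, h2, Complex.mul_conj']
    exact_mod_cast sq_nonneg ‖dotProduct (star y) x‖

lemma conj_rk1 {ι κ : Type*} [Fintype ι] [Fintype κ] [DecidableEq ι]
    (A : Matrix κ ι ℂ) (y : ι → ℂ) :
    A * rk1 y * Aᴴ = rk1 (A *ᵥ y) := by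
  ext p q
  simp only [rk1, Matrix.mul_apply, Matrix.vecMulVec_apply, Matrix.conjTranspose_apply,
    Matrix.mulVec, dotProduct, Pi.star_apply, RCLike.star_def, Finset.sum_mul,
    Finset.mul_sum, map_sum, _root_.map_mul]
  apply Finset.sum_congr rfl; intro s _
  apply Finset.sum_congr rfl; intro r _
  ring

/-- PSD decomposition into rank-ones via the square root. -/
lemma psd_eq_sum_rk1 {ι : Type*} [Fintype ι] [DecidableEq ι] {X : Matrix ι ι ℂ}
    (hX : X.PosSemidef) : X = ∑ i : ι, rk1 (fun p => hX.sqrt p i) := by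
  ext p q
  have h := hX.sqrt_mul_self
  calc X p q = (hX.sqrt * hX.sqrt) p q := by rw [h]
    _ = ∑ i, hX.sqrt p i * hX.sqrt i q := by rw [Matrix.mul_apply]
    _ = ∑ i, hX.sqrt p i * conj (hX.sqrt q i) := by
        apply Finset.sum_congr rfl; intro i _
        rw [← hX.posSemidef_sqrt.1.apply i q, RCLike.star_def]
    _ = (∑ i : ι, rk1 (fun p => hX.sqrt p i)) p q := by
        simp [rk1, Matrix.sum_apply, Matrix.vecMulVec_apply]

end Stmt15Aux
namespace Stmt15Aux

/-- Block of a matrix on a product index. -/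
def blk {α β : Type*} {j : ℕ} (M : Matrix (α × Fin j) (β × Fin j) ℂ) (s t : Fin j) :
    Matrix α β ℂ :=
  Matrix.of fun i i' => M (i, s) (i', t)

lemma tensId_apply {a b : ℕ} (Φ : MatC a →ₗ[ℂ] MatC b) (j : ℕ)
    (X : Matrix (Fin a × Fin j) (Fin a × Fin j) ℂ) (p q : Fin b × Fin j) :
    tensId Φ j X p q = Φ (blk X p.2 q.2) p.1 q.1 := rfl

lemma blk_sum {α β : Type*} {j : ℕ} {κ : Type*} (s : Finset κ)
    (M : κ → Matrix (α × Fin j) (β × Fin j) ℂ) (u t : Fin j) :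
    blk (∑ i ∈ s, M i) u t = ∑ i ∈ s, blk (M i) u t := by
  ext p q
  simp [blk, Matrix.sum_apply]

lemma tensId_sum {a b : ℕ} (Φ : MatC a →ₗ[ℂ] MatC b) (j : ℕ) {κ : Type*} (s : Finset κ)
    (M : κ → Matrix (Fin a × Fin j) (Fin a × Fin j) ℂ) :
    tensId Φ j (∑ i ∈ s, M i) = ∑ i ∈ s, tensId Φ j (M i) := by
  ext p q
  rw [Matrix.sum_apply]
  rw [tensId_apply, blk_sum, map_sum]
  rw [Matrix.sum_apply]
  exact Finset.sum_congr rfl fun i _ => rfl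

lemma tensId_isHermitian {a b j : ℕ} {Φ : MatC a →ₗ[ℂ] MatC b} (hΦ : HermPreserving Φ)
    {X : Matrix (Fin a × Fin j) (Fin a × Fin j) ℂ} (hX : X.IsHermitian) :
    (tensId Φ j X).IsHermitian := by
  rw [Matrix.IsHermitian]
  ext p q
  rw [Matrix.conjTranspose_apply, tensId_apply, tensId_apply]
  have hblk : blk X q.2 p.2 = (blk X p.2 q.2)ᴴ := by
    ext i i'
    rw [blk, Matrix.conjTranspose_apply]
    simp only [blk, Matrix.of_apply]
    rw [← hX.apply (i', p.2) (i, q.2), star_star]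
  rw [hblk, hΦ, Matrix.conjTranspose_apply]
  exact star_star _

end Stmt15Aux
namespace Stmt15Aux

lemma kron_one_conj_apply {a b c j : ℕ} (A : Matrix (Fin b) (Fin a) ℂ)
    (B : Matrix (Fin c) (Fin a) ℂ) (M : Matrix (Fin a × Fin j) (Fin a × Fin j) ℂ)
    (p : Fin b × Fin j) (q : Fin c × Fin j) :
    ((A ⊗ₖ (1 : MatC j)) * M * (B ⊗ₖ (1 : MatC j))ᴴ) p q
      = (A * blk M p.2 q.2 * Bᴴ) p.1 q.1 := by
  simp only [Matrix.mul_apply, Matrix.conjTranspose_apply, Matrix.kroneckerMap_apply,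
    Matrix.one_apply, blk, Matrix.of_apply, Fintype.sum_prod_type, mul_ite, ite_mul,
    mul_one, mul_zero, zero_mul, one_mul, mul_comm, apply_ite (starRingEnd ℂ), map_zero]
  simp [apply_ite (starRingEnd ℂ), mul_ite, ite_mul, star_zero, Finset.sum_ite_eq,
    Finset.sum_ite_eq', Finset.mul_sum, mul_comm, mul_left_comm]

end Stmt15Aux
namespace Stmt15Aux

lemma one_kron_conj_apply {a c k j : ℕ} (V W : Matrix (Fin j) (Fin k) ℂ)
    (M : Matrix (Fin a × Fin k) (Fin c × Fin k) ℂ) (p : Fin a × Fin j) (q : Fin c × Fin j) :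
    (((1 : MatC a) ⊗ₖ V) * M * ((1 : MatC c) ⊗ₖ W)ᴴ) p q
      = ∑ s : Fin k, ∑ t : Fin k, V p.2 s * (M (p.1, s) (q.1, t) * conj (W q.2 t)) := by
  simp only [Matrix.mul_apply, Matrix.conjTranspose_apply, Matrix.kroneckerMap_apply,
    Matrix.one_apply, Fintype.sum_prod_type, ite_mul, zero_mul, one_mul,
    apply_ite (starRingEnd ℂ), map_zero, mul_ite, mul_zero, mul_one]
  simp [Finset.sum_ite_eq, Finset.sum_ite_eq', Finset.mul_sum, Finset.sum_mul, mul_comm,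
    mul_left_comm, apply_ite (starRingEnd ℂ), mul_ite, ite_mul]
  rw [Finset.sum_comm]
  exact Finset.sum_congr rfl fun s _ => Finset.sum_congr rfl fun t _ => by ring

lemma tensId_comp_ad {m n j : ℕ} (E : MatC n) (F : MatC m) (Φ : MatC m →ₗ[ℂ] MatC n)
    (X : Matrix (Fin m × Fin j) (Fin m × Fin j) ℂ) :
    tensId (adMap E ∘ₗ Φ ∘ₗ adMap F) j X
      = (E ⊗ₖ (1 : MatC j)) * tensId Φ j ((F ⊗ₖ (1 : MatC j)) * X * (F ⊗ₖ (1 : MatC j))ᴴ)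
          * (E ⊗ₖ (1 : MatC j))ᴴ := by
  ext p q
  rw [kron_one_conj_apply]
  have h2 : blk ((F ⊗ₖ (1 : MatC j)) * X * (F ⊗ₖ (1 : MatC j))ᴴ) p.2 q.2
      = F * blk X p.2 q.2 * Fᴴ := by
    ext r r'
    show ((F ⊗ₖ (1 : MatC j)) * X * (F ⊗ₖ (1 : MatC j))ᴴ) (r, p.2) (r', q.2) = _
    rw [kron_one_conj_apply]
  have h1 : blk (tensId Φ j ((F ⊗ₖ (1 : MatC j)) * X * (F ⊗ₖ (1 : MatC j))ᴴ)) p.2 q.2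
      = Φ (F * blk X p.2 q.2 * Fᴴ) := by
    ext i i'
    show tensId Φ j _ (i, p.2) (i', q.2) = _
    rw [tensId_apply, h2]
  rw [h1]
  rfl

lemma tensId_one_kron {a b j k : ℕ} (Φ : MatC a →ₗ[ℂ] MatC b) (V : Matrix (Fin j) (Fin k) ℂ)
    (X : Matrix (Fin a × Fin k) (Fin a × Fin k) ℂ) :
    tensId Φ j (((1 : MatC a) ⊗ₖ V) * X * ((1 : MatC a) ⊗ₖ V)ᴴ)
      = ((1 : MatC b) ⊗ₖ V) * tensId Φ k X * ((1 : MatC b) ⊗ₖ V)ᴴ := by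
  ext p q
  rw [one_kron_conj_apply, tensId_apply]
  have h1 : blk (((1 : MatC a) ⊗ₖ V) * X * ((1 : MatC a) ⊗ₖ V)ᴴ) p.2 q.2
      = ∑ s : Fin k, ∑ t : Fin k, (V p.2 s * conj (V q.2 t)) • blk X s t := by
    ext i i'
    show (((1 : MatC a) ⊗ₖ V) * X * ((1 : MatC a) ⊗ₖ V)ᴴ) (i, p.2) (i', q.2) = _
    rw [one_kron_conj_apply]
    simp only [Matrix.sum_apply, Matrix.smul_apply, blk, Matrix.of_apply, smul_eq_mul]
    exact Finset.sum_congr rfl fun s _ => Finset.sum_congr rfl fun t _ => by ring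
  rw [h1, map_sum]
  rw [Matrix.sum_apply]
  refine Finset.sum_congr rfl fun s _ => ?_
  rw [map_sum, Matrix.sum_apply]
  refine Finset.sum_congr rfl fun t _ => ?_
  rw [_root_.map_smul, Matrix.smul_apply, tensId_apply, smul_eq_mul]
  ring

end Stmt15Aux
namespace Stmt15Aux

/-- Auxiliary: sum over `Fin k` of a dite supported below `d ≤ k`. -/
lemma sum_dite_lt {M : Type*} [AddCommMonoid M] {d k : ℕ} (hd : d ≤ k)
    (g : Fin d → M) :
    (∑ t : Fin k, if ht : (t : ℕ) < d then g ⟨t, ht⟩ else 0) = ∑ s : Fin d, g s := by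
  have h1 := Fin.sum_univ_eq_sum_range (fun i => if ht : i < d then g ⟨i, ht⟩ else 0) k
  have h2 := Fin.sum_univ_eq_sum_range (fun i => if ht : i < d then g ⟨i, ht⟩ else 0) d
  rw [h1, ← Finset.sum_subset (Finset.range_subset_range.2 hd) (fun x _ hx => by
    rw [Finset.mem_range, not_lt] at hx
    exact dif_neg (not_lt.2 hx)), ← h2]
  exact Finset.sum_congr rfl fun s _ => by simp [s.isLt]

/-- Rank factorization: a matrix of rank at most `k` factors through `ℂ^k`. -/
lemma exists_factorization {p q k : ℕ} (A : Matrix (Fin p) (Fin q) ℂ) (h : A.rank ≤ k) :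
    ∃ (U : Matrix (Fin p) (Fin k) ℂ) (N : Matrix (Fin k) (Fin q) ℂ), A = U * N := by
  classical
  set R := LinearMap.range A.mulVecLin with hR
  have hd : Module.finrank ℂ R ≤ k := h
  set d := Module.finrank ℂ R with hdd
  let b : Module.Basis (Fin d) ℂ R := Module.finBasis ℂ R
  have hc : ∀ j : Fin q, A *ᵥ Pi.single j 1 ∈ R := fun j => ⟨Pi.single j 1, rfl⟩
  let c : Fin q → R := fun j => ⟨A *ᵥ Pi.single j 1, hc j⟩
  set U : Matrix (Fin p) (Fin k) ℂ :=
    Matrix.of (fun i t => if ht : (t : ℕ) < d then (b ⟨t, ht⟩ : Fin p → ℂ) i else 0) with hU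
  set N : Matrix (Fin k) (Fin q) ℂ :=
    Matrix.of (fun t j => if ht : (t : ℕ) < d then b.repr (c j) ⟨t, ht⟩ else 0) with hN
  refine ⟨U, N, ?_⟩
  ext i j
  rw [Matrix.mul_apply]
  have hterm : ∀ t : Fin k, U i t * N t j
      = if ht : (t : ℕ) < d then b.repr (c j) ⟨t, ht⟩ * (b ⟨t, ht⟩ : Fin p → ℂ) i else 0 := by
    intro t
    by_cases ht : (t : ℕ) < d
    · simp [hU, hN, ht, mul_comm]
    · simp [hU, hN, ht]
  rw [Finset.sum_congr rfl fun t _ => hterm t,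
    sum_dite_lt hd (fun s => b.repr (c j) s * (b s : Fin p → ℂ) i)]
  have hsum : (∑ s : Fin d, (b.repr (c j) s) • (b s : Fin p → ℂ)) = ((c j : R) : Fin p → ℂ) := by
    have hb := b.sum_repr (c j)
    calc (∑ s : Fin d, (b.repr (c j) s) • (b s : Fin p → ℂ))
        = ((∑ s : Fin d, (b.repr (c j) s) • b s : R) : Fin p → ℂ) := by
          push_cast [Submodule.coe_sum]
          rfl
      _ = _ := by rw [hb]
  have := congrFun hsum i
  rw [Finset.sum_apply] at this
  simp only [Pi.smul_apply, smul_eq_mul] at this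
  rw [this]
  simp [c, Matrix.mulVec_single]

end Stmt15Aux
namespace Stmt15Aux

lemma rk1_mul_rk1 {ι : Type*} [Fintype ι] (a b : ι → ℂ) :
    rk1 a * rk1 b = (dotProduct (star a) b) • Matrix.vecMulVec a (star b) := by
  ext p q
  simp only [rk1, Matrix.mul_apply, Matrix.vecMulVec_apply, Matrix.smul_apply, smul_eq_mul,
    dotProduct, Pi.star_apply, RCLike.star_def, Finset.sum_mul, Finset.mul_sum]
  apply Finset.sum_congr rfl; intro l _; ring

/-- Existence of a rank-`k` orthogonal projection fixing `k` given vectors. -/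
lemma exists_proj {m k : ℕ} (hk : k ≤ m) (y : Fin m × Fin k → ℂ) :
    ∃ F : MatC m, F.IsHermitian ∧ F * F = F ∧ F.rank = k ∧
      ∀ s : Fin k, F *ᵥ (fun i => y (i, s)) = fun i => y (i, s) := by
  classical
  set col : Fin k → EuclideanSpace ℂ (Fin m) := fun s => WithLp.toLp 2 (fun i => y (i, s)) with hcol
  set S : Submodule ℂ (EuclideanSpace ℂ (Fin m)) := Submodule.span ℂ (Set.range col) with hS
  set d : ℕ := Module.finrank ℂ S with hd
  have hdk : d ≤ k := by
    rw [hd, hS]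
    refine le_trans (finrank_span_le_card _) ?_
    rw [Set.toFinset_range]
    exact le_trans (Finset.card_image_le) (by simp)
  let c : OrthonormalBasis (Fin d) ℂ S := stdOrthonormalBasis ℂ S
  set v : Fin m → EuclideanSpace ℂ (Fin m) :=
    fun i => if h : (i : ℕ) < d then (c ⟨i, h⟩ : EuclideanSpace ℂ (Fin m)) else 0 with hv
  have hvon : Orthonormal ℂ (Set.restrict {i : Fin m | (i : ℕ) < d} v) := by
    rw [orthonormal_iff_ite]
    rintro ⟨i, hi⟩ ⟨j, hj⟩
    have hi' : (i : ℕ) < d := hi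
    have hj' : (j : ℕ) < d := hj
    show inner ℂ (v i) (v j) = _
    simp only [hv, dif_pos hi', dif_pos hj']
    rw [← Submodule.coe_inner]
    rw [orthonormal_iff_ite.mp c.orthonormal ⟨i, hi'⟩ ⟨j, hj'⟩]
    congr 1
    simp [Fin.ext_iff, Subtype.ext_iff]
  have hcard : Module.finrank ℂ (EuclideanSpace ℂ (Fin m)) = Fintype.card (Fin m) := by
    simp [finrank_euclideanSpace]
  obtain ⟨bb, hbb⟩ := hvon.exists_orthonormalBasis_extension_of_card_eq hcard
  set w : Fin k → (Fin m → ℂ) := fun t => bb (Fin.castLE hk t) with hwdef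
  have hw : ∀ t t', dotProduct (star (w t)) (w t') = if t = t' then 1 else 0 := by
    intro t t'
    have h1 := orthonormal_iff_ite.mp bb.orthonormal (Fin.castLE hk t) (Fin.castLE hk t')
    rw [PiLp.inner_apply] at h1
    simp only [RCLike.inner_apply] at h1
    have h0 : dotProduct (star (w t)) (w t')
        = ∑ x, bb (Fin.castLE hk t') x * conj (bb (Fin.castLE hk t) x) := by
      simp [dotProduct, hwdef, mul_comm]
    rw [h0, h1]
    by_cases h : t = t'
    · subst h; simp
    · rw [if_neg h, if_neg]
      intro hc
      exact h (by simpa [Fin.ext_iff] using hc)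
  set F : MatC m := ∑ t : Fin k, rk1 (w t) with hF
  have hFherm : F.IsHermitian := by
    rw [Matrix.IsHermitian, hF, Matrix.conjTranspose_sum]
    exact Finset.sum_congr rfl fun t _ => (rk1_posSemidef (w t)).1
  have hFv : ∀ z : Fin m → ℂ, F *ᵥ z = ∑ t, (dotProduct (star (w t)) z) • w t := by
    intro z
    rw [hF]
    ext i
    simp only [Matrix.mulVec, dotProduct, Matrix.sum_apply, Finset.sum_apply,
      Finset.sum_mul, Pi.smul_apply, smul_eq_mul, rk1, Matrix.vecMulVec_apply, Pi.star_apply,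
      RCLike.star_def]
    rw [Finset.sum_comm]
    exact Finset.sum_congr rfl fun t _ => Finset.sum_congr rfl fun x _ => by ring
  have hFw : ∀ t, F *ᵥ w t = w t := by
    intro t
    rw [hFv]
    simp [hw, ite_smul]
  have hFF : F * F = F := by
    rw [hF, Finset.sum_mul]
    refine Finset.sum_congr rfl fun t _ => ?_
    rw [Finset.mul_sum]
    have : ∀ t' : Fin k, rk1 (w t) * rk1 (w t')
        = if t = t' then rk1 (w t) else 0 := by
      intro t'
      rw [rk1_mul_rk1, hw]
      by_cases h : t = t' <;> simp [h, rk1]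
    simp [this]
  have hli : LinearIndependent ℂ w := by
    rw [Fintype.linearIndependent_iff]
    intro g hg t
    have h3 := congrArg (fun z => dotProduct (star (w t)) z) hg
    rw [show dotProduct (star (w t)) (∑ t', g t' • w t')
        = ∑ t', g t' * dotProduct (star (w t)) (w t') by
      simp only [dotProduct, Finset.sum_apply, Pi.smul_apply, smul_eq_mul,
        Finset.mul_sum]
      rw [Finset.sum_comm]
      exact Finset.sum_congr rfl fun a _ => Finset.sum_congr rfl fun b _ => by ring] at h3
    simp only [hw, mul_ite, mul_one, mul_zero, Finset.sum_ite_eq, Finset.mem_univ,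
      if_true] at h3
    simpa [dotProduct] using h3
  have hrange : LinearMap.range F.mulVecLin = Submodule.span ℂ (Set.range w) := by
    apply le_antisymm
    · rintro _ ⟨z, rfl⟩
      rw [Matrix.mulVecLin_apply, hFv]
      exact Submodule.sum_mem _ fun t _ =>
        Submodule.smul_mem _ _ (Submodule.subset_span ⟨t, rfl⟩)
    · rw [Submodule.span_le]
      rintro _ ⟨t, rfl⟩
      exact ⟨w t, by rw [Matrix.mulVecLin_apply, hFw]⟩
  have hrank : F.rank = k := by
    rw [Matrix.rank, hrange, finrank_span_eq_card hli, Fintype.card_fin]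
  refine ⟨F, hFherm, hFF, hrank, ?_⟩
  -- every element of S is fixed
  have hfixc : ∀ i : Fin d, F *ᵥ (c i : EuclideanSpace ℂ (Fin m)) = (c i : EuclideanSpace ℂ (Fin m)) := by
    intro i
    have hmem : (Fin.castLE hk (Fin.castLE hdk i) : Fin m) ∈ {i : Fin m | (i : ℕ) < d} :=
      i.isLt
    have hcw : (c i : EuclideanSpace ℂ (Fin m)) = w (Fin.castLE hdk i) := by
      show (c i : EuclideanSpace ℂ (Fin m)).ofLp = (bb (Fin.castLE hk (Fin.castLE hdk i))).ofLp
      rw [hbb _ hmem, hv]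
      simp only [Fin.coe_castLE]
      rw [dif_pos i.isLt]
    rw [hcw, hFw]
  have hfix : ∀ z : EuclideanSpace ℂ (Fin m), z ∈ S → F *ᵥ z = z := by
    intro z hz
    have hrep := c.sum_repr ⟨z, hz⟩
    have hz2 : z = ∑ i : Fin d, c.repr ⟨z, hz⟩ i • (c i : EuclideanSpace ℂ (Fin m)) := by
      conv_lhs => rw [show z = ((⟨z, hz⟩ : S) : EuclideanSpace ℂ (Fin m)) from rfl, ← hrep]
      push_cast [Submodule.coe_sum]
      rfl
    conv_lhs => rw [hz2]
    have hlin : F *ᵥ (∑ i : Fin d, c.repr ⟨z, hz⟩ i • (c i : EuclideanSpace ℂ (Fin m))).ofLp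
        = ∑ i : Fin d, c.repr ⟨z, hz⟩ i • (F *ᵥ (c i : EuclideanSpace ℂ (Fin m))) := by
      rw [WithLp.ofLp_sum, ← Matrix.mulVecLin_apply, map_sum]
      exact Finset.sum_congr rfl fun i _ => by
        rw [WithLp.ofLp_smul, LinearMap.map_smul, Matrix.mulVecLin_apply]
    rw [hlin]
    rw [Finset.sum_congr rfl fun i _ => by rw [hfixc i]]
    rw [congrArg WithLp.ofLp hz2, WithLp.ofLp_sum]
    rfl
  intro s
  exact hfix (col s) (Submodule.subset_span ⟨s, rfl⟩)

end Stmt15Aux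
namespace Stmt15Aux

lemma kron_one_conjTranspose {a b j : ℕ} (A : Matrix (Fin a) (Fin b) ℂ) :
    (A ⊗ₖ (1 : MatC j))ᴴ = Aᴴ ⊗ₖ (1 : MatC j) := by
  ext p q
  simp only [Matrix.conjTranspose_apply, Matrix.kroneckerMap_apply, Matrix.one_apply,
    star_mul', apply_ite (star : ℂ → ℂ), star_one, star_zero]
  by_cases h : p.2 = q.2 <;> simp [h, eq_comm, mul_comm]

lemma sum_mulVec' {ι α : Type*} [Fintype α] (s : Finset ι) (M : ι → Matrix α α ℂ)
    (x : α → ℂ) : (∑ i ∈ s, M i) *ᵥ x = ∑ i ∈ s, (M i) *ᵥ x := by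
  ext r
  simp only [Matrix.mulVec, dotProduct, Matrix.sum_apply, Finset.sum_apply,
    Finset.sum_mul]
  rw [Finset.sum_comm]

lemma dot_sum' {ι α : Type*} [Fintype α] (s : Finset ι) (u : α → ℂ) (v : ι → α → ℂ) :
    dotProduct u (∑ i ∈ s, v i) = ∑ i ∈ s, dotProduct u (v i) := by
  simp only [dotProduct, Finset.sum_apply, Finset.mul_sum]
  rw [Finset.sum_comm]

/-- If (as a matrix) `y` factors through `ℂ^k` and `Φ` is `k`-positive then
`(Φ ⊗ id_j)(y yᴴ)` is PSD. -/
lemma tensId_rk1_posSemidef {m n j k : ℕ} {Φ : MatC m →ₗ[ℂ] MatC n}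
    (hK : IsKPositive Φ k) (y : Fin m × Fin j → ℂ)
    (U : Matrix (Fin m) (Fin k) ℂ) (N : Matrix (Fin k) (Fin j) ℂ)
    (hUN : (Matrix.of fun i s => y (i, s)) = U * N) :
    (tensId Φ j (rk1 y)).PosSemidef := by
  set u : Fin m × Fin k → ℂ := fun r => U r.1 r.2 with hu
  set V : Matrix (Fin j) (Fin k) ℂ := Nᵀ with hV
  have hyv : y = ((1 : MatC m) ⊗ₖ V) *ᵥ u := by
    ext r
    have h1 : y (r.1, r.2) = (U * N) r.1 r.2 := by rw [← hUN]; rfl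
    have h2 : (((1 : MatC m) ⊗ₖ V) *ᵥ u) r = ∑ t, V r.2 t * U r.1 t := by
      simp only [Matrix.mulVec, dotProduct, Fintype.sum_prod_type,
        Matrix.kroneckerMap_apply, Matrix.one_apply, ite_mul, zero_mul, one_mul, hu]
      rw [Finset.sum_comm]
      simp [Finset.sum_ite_eq, Finset.sum_ite_eq']
    rw [show y r = y (r.1, r.2) from rfl, h1, h2, Matrix.mul_apply]
    exact Finset.sum_congr rfl fun t _ => by rw [hV]; simp [Matrix.transpose_apply]; ring
  rw [hyv, ← conj_rk1, tensId_one_kron]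
  exact (hK (rk1 u) (rk1_posSemidef u)).mul_mul_conjTranspose_same _

lemma kron_one_mulVec_col {a b j : ℕ} (A : Matrix (Fin a) (Fin b) ℂ)
    (x : Fin b × Fin j → ℂ) (r : Fin a × Fin j) :
    ((A ⊗ₖ (1 : MatC j)) *ᵥ x) r = (A *ᵥ fun i => x (i, r.2)) r.1 := by
  simp only [Matrix.mulVec, dotProduct, Fintype.sum_prod_type,
    Matrix.kroneckerMap_apply, Matrix.one_apply, mul_ite, mul_one, mul_zero, ite_mul,
    zero_mul, one_mul]
  refine Finset.sum_congr rfl fun i _ => ?_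
  simp [Finset.sum_ite_eq, Finset.sum_ite_eq']

end Stmt15Aux
open Stmt15Aux in
/-- `Φ` is `k`-positive iff `Ad_E∘Φ∘Ad_F` is CP for all rank-`k` orthogonal
projections `E` on `H` and `F` on `K`. -/
theorem stmt15 {m n k : ℕ} (hkm : k ≤ m) (hkn : k ≤ n) (Φ : MatC m →ₗ[ℂ] MatC n)
    (hΦ : HermPreserving Φ) :
    IsKPositive Φ k ↔
      ∀ E : MatC n, E.IsHermitian → E * E = E → E.rank = k →
        ∀ F : MatC m, F.IsHermitian → F * F = F → F.rank = k →
          IsCompletelyPositive (adMap E ∘ₗ Φ ∘ₗ adMap F) := by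
  constructor
  · intro hK E hEh hEp hEr F hFh hFp hFr j X hX
    rw [tensId_comp_ad]
    refine Matrix.PosSemidef.mul_mul_conjTranspose_same ?_ _
    have hXd := psd_eq_sum_rk1 hX
    rw [hXd]
    have h2 : (F ⊗ₖ (1 : MatC j)) * (∑ i : Fin m × Fin j, rk1 (fun p => hX.sqrt p i))
          * (F ⊗ₖ (1 : MatC j))ᴴ
        = ∑ i : Fin m × Fin j,
            rk1 ((F ⊗ₖ (1 : MatC j)) *ᵥ (fun p => hX.sqrt p i)) := by
      rw [Finset.mul_sum, Finset.sum_mul]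
      exact Finset.sum_congr rfl fun i _ => conj_rk1 _ _
    rw [h2, tensId_sum]
    refine Finset.sum_induction _ _ (fun A B hA hB => hA.add hB) Matrix.PosSemidef.zero
      (fun i _ => ?_)
    set x0 : Fin m × Fin j → ℂ := fun p => hX.sqrt p i with hx0
    have hMat : (Matrix.of fun i' s => ((F ⊗ₖ (1 : MatC j)) *ᵥ x0) (i', s))
        = F * (Matrix.of fun i' s => x0 (i', s)) := by
      ext i' s
      rw [Matrix.of_apply, kron_one_mulVec_col]
      rfl
    have hr : (F * (Matrix.of fun i' s => x0 (i', s))).rank ≤ k :=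
      le_trans (Matrix.rank_mul_le_left _ _) (le_of_eq hFr)
    obtain ⟨U, N, hUN⟩ := exists_factorization _ hr
    exact tensId_rk1_posSemidef hK _ U N (by rw [hMat, hUN])
  · intro hCP X hX
    refine Matrix.PosSemidef.of_dotProduct_mulVec_nonneg (tensId_isHermitian hΦ hX.1) fun x => ?_
    have hXd := psd_eq_sum_rk1 hX
    rw [hXd, tensId_sum, sum_mulVec', dot_sum']
    refine Finset.sum_nonneg fun i _ => ?_
    set y : Fin m × Fin k → ℂ := fun p => hX.sqrt p i with hy
    obtain ⟨E, hEh, hEp, hEr, hEfix⟩ := exists_proj hkn x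
    obtain ⟨F, hFh, hFp, hFr, hFfix⟩ := exists_proj hkm y
    have hE1 : (E ⊗ₖ (1 : MatC k)) *ᵥ x = x := by
      ext r
      rw [kron_one_mulVec_col, hEfix r.2]
    have hF1 : (F ⊗ₖ (1 : MatC k)) *ᵥ y = y := by
      ext r
      rw [kron_one_mulVec_col, hFfix r.2]
    have hcp := (hCP E hEh hEp hEr F hFh hFp hFr) k (rk1 y) (rk1_posSemidef y)
    rw [tensId_comp_ad, conj_rk1, hF1] at hcp
    have h6 := hcp.dotProduct_mulVec_nonneg x
    have hB : (E ⊗ₖ (1 : MatC k))ᴴ *ᵥ x = x := by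
      rw [kron_one_conjTranspose, hEh]
      exact hE1
    have hvmul : star x ᵥ* (E ⊗ₖ (1 : MatC k)) = star x := by
      have h7 : star ((E ⊗ₖ (1 : MatC k))ᴴ *ᵥ x)
          = star x ᵥ* (E ⊗ₖ (1 : MatC k)) := by
        rw [Matrix.star_mulVec, Matrix.conjTranspose_conjTranspose]
      rw [← h7, hB]
    have key : dotProduct (star x)
          ((((E ⊗ₖ (1 : MatC k))) * tensId Φ k (rk1 y) * (E ⊗ₖ (1 : MatC k))ᴴ) *ᵥ x)
        = dotProduct (star x) ((tensId Φ k (rk1 y)) *ᵥ x) := by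
      rw [← Matrix.mulVec_mulVec, hB, ← Matrix.mulVec_mulVec,
        dotProduct_mulVec, hvmul]
    rw [key] at h6
    exact h6
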